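/- Let q ≥ 1 and let g : ℝ/ℤ → ℝⁿ be measurable. Then ∫₀¹ ∫_{ℝ/ℤ} ∫_{-1/2}^{1/2} |g(y+θz) − g(y)|^q / |z|^q dz dy dθ ≤ ∫_{ℝ/ℤ} ∫_{-1/2}^{1/2} |g(y+z) − g(y)|^q / |z|^q dz dy, i.e. the θ-averaged difference quotient integral is bounded by the Sobolev–Slobodeckiĭ seminorm [g]_{W^{1-1/q,q}}^q. -/

import Mathlib

open MeasureTheory Set Filter
open scoped RealInnerProductSpace ENNReal Topology

noncomputable section

/-- The distance on the circle `ℝ/ℤ` between the points represented by `x` and `y`. -/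
def circDist (x y : ℝ) : ℝ := ‖((x - y : ℝ) : AddCircle (1 : ℝ))‖

/-- The representative of `z` modulo `1` lying in `(-1/2, 1/2]`. -/
def wrap (z : ℝ) : ℝ := 1 / 2 - Int.fract (1 / 2 - z)

/-- Squared wedge norm `|a ∧ b|² = |a|²|b|² - ⟨a,b⟩²`. -/
def wedgeSq {n : ℕ} (a b : EuclideanSpace ℝ (Fin n)) : ℝ :=
  ‖a‖ ^ 2 * ‖b‖ ^ 2 - ⟪a, b⟫ ^ 2

/-- Wedge inner product `⟨a∧b, c∧d⟩ = ⟨a,c⟩⟨b,d⟩ - ⟨a,d⟩⟨b,c⟩`. -/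
def wedgeInner {n : ℕ} (a b c d : EuclideanSpace ℝ (Fin n)) : ℝ :=
  ⟪a, c⟫ * ⟪b, d⟫ - ⟪a, d⟫ * ⟪b, c⟫

/-- Fundamental domain for double integrals over `(ℝ/ℤ)²`. -/
def unitSq : Set (ℝ × ℝ) := Ioc (0 : ℝ) 1 ×ˢ Ioc (0 : ℝ) 1

/-- The tangent-point functional `TP` (extended-real-valued). -/
def TPe {n : ℕ} (q : ℝ) (u : ℝ → EuclideanSpace ℝ (Fin n)) : ℝ≥0∞ :=
  ENNReal.ofReal (1 / q) *
    ∫⁻ p in unitSq, ENNReal.ofReal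
      (wedgeSq (deriv u p.2) (u p.1 - u p.2) ^ (q / 2) / ‖u p.1 - u p.2‖ ^ (2 * q))

/-- The tangent-point functional `TP` (real-valued). -/
def TPr {n : ℕ} (q : ℝ) (u : ℝ → EuclideanSpace ℝ (Fin n)) : ℝ := (TPe q u).toReal

/-- The `q`-th power of the Sobolev–Slobodeckii seminorm `[f]_{W^{s,q}}` on `ℝ/ℤ`. -/
def sobSemPow {n : ℕ} (s q : ℝ) (f : ℝ → EuclideanSpace ℝ (Fin n)) : ℝ≥0∞ :=
  ∫⁻ p in unitSq, ENNReal.ofReal (‖f p.1 - f p.2‖ ^ q / circDist p.1 p.2 ^ (1 + s * q))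

/-- The `W^{s,q}`-norm `‖f‖_{L^q} + [f]_{W^{s,q}}`. -/
def Wnorm {n : ℕ} (s q : ℝ) (f : ℝ → EuclideanSpace ℝ (Fin n)) : ℝ :=
  (∫ x in Ioc (0 : ℝ) 1, ‖f x‖ ^ q) ^ (1 / q) + (sobSemPow s q f).toReal ^ (1 / q)

/-- The bi-Lipschitz constant `bil(u) = sup_{x ≢ y} |x-y|_{ℝ/ℤ}/|u(x)-u(y)|`. -/
def bil {n : ℕ} (u : ℝ → EuclideanSpace ℝ (Fin n)) : ℝ≥0∞ :=
  ⨆ (x : ℝ) (y : ℝ) (_ : circDist x y ≠ 0),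
    ENNReal.ofReal (circDist x y) / ENNReal.ofReal ‖u x - u y‖

/-- The `L^∞`-norm of the derivative of `u`. -/
def linfD {n : ℕ} (u : ℝ → EuclideanSpace ℝ (Fin n)) : ℝ≥0∞ :=
  ⨆ x : ℝ, (‖deriv u x‖₊ : ℝ≥0∞)

/-- A periodic curve is embedded if it is injective on the circle `ℝ/ℤ`. -/
def Embedded {n : ℕ} (u : ℝ → EuclideanSpace ℝ (Fin n)) : Prop :=
  ∀ x y : ℝ, u x = u y → ((x : AddCircle (1 : ℝ)) = (y : AddCircle (1 : ℝ)))

/-- A curve is regular if `min_{ℝ/ℤ} |u'| > 0`. -/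
def Regular {n : ℕ} (u : ℝ → EuclideanSpace ℝ (Fin n)) : Prop :=
  0 < ⨅ x : ℝ, ‖deriv u x‖

/-- Orthogonal projection of `b` onto the orthogonal complement of `ℝ a`. -/
def projPerp {n : ℕ} (a b : EuclideanSpace ℝ (Fin n)) : EuclideanSpace ℝ (Fin n) :=
  b - (⟪b, a⟫ / ‖a‖ ^ 2) • a

/-- The classical tangent-point functional (extended-real-valued). -/
def TPcle {n : ℕ} (q : ℝ) (u : ℝ → EuclideanSpace ℝ (Fin n)) : ℝ≥0∞ :=
  ENNReal.ofReal (1 / q) *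
    ∫⁻ p in unitSq, ENNReal.ofReal
      (‖projPerp (deriv u p.2) (u p.1 - u p.2)‖ ^ q / ‖u p.1 - u p.2‖ ^ (2 * q) *
        (‖deriv u p.1‖ * ‖deriv u p.2‖))

/-- The integrand of the functional `M(u; v, w)`. -/
def Mintegrand {n : ℕ} (q : ℝ) (u v w : ℝ → EuclideanSpace ℝ (Fin n)) (p : ℝ × ℝ) : ℝ :=
  wedgeSq (deriv u p.2) (u p.1 - u p.2) ^ ((q - 2) / 2) / ‖u p.1 - u p.2‖ ^ (2 * q) *
    wedgeInner (deriv u p.2) (u p.1 - u p.2) (deriv v p.2)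
      (w p.1 - w p.2 - wrap (p.1 - p.2) • deriv w p.2)

/-- The functional `M(u; v, w)` appearing in the first variation of `TP`. -/
def Mfun {n : ℕ} (q : ℝ) (u v w : ℝ → EuclideanSpace ℝ (Fin n)) : ℝ :=
  ∫ p in unitSq, Mintegrand q u v w p

/-- The integrand of the functional `A(u; v, w)`. -/
def Aintegrand {n : ℕ} (q : ℝ) (u v w : ℝ → EuclideanSpace ℝ (Fin n)) (p : ℝ × ℝ) : ℝ :=
  wedgeSq (deriv u p.2) (u p.1 - u p.2) ^ (q / 2) / ‖u p.1 - u p.2‖ ^ (2 * q + 2) *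
    ⟪v p.1 - v p.2, w p.1 - w p.2⟫

/-- The functional `A(u; v, w)` appearing in the first variation of `TP`. -/
def Afun {n : ℕ} (q : ℝ) (u v w : ℝ → EuclideanSpace ℝ (Fin n)) : ℝ :=
  ∫ p in unitSq, Aintegrand q u v w p

/-- The first variation `δTP(u)[w] = M(u;u,w) + M(u;w,u) - 2A(u;u,w)`. -/
def deltaTP {n : ℕ} (q : ℝ) (u w : ℝ → EuclideanSpace ℝ (Fin n)) : ℝ :=
  Mfun q u u w + Mfun q u w u - 2 * Afun q u u w

/-- The `H²` inner product on periodic curves. -/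
def H2inner (v w : ℝ → EuclideanSpace ℝ (Fin 3)) : ℝ :=
  ∫ x in Ioc (0 : ℝ) 1,
    (⟪v x, w x⟫ + ⟪deriv v x, deriv w x⟫ + ⟪deriv (deriv v) x, deriv (deriv w) x⟫)

/-- The total energy `E(u) = (κ/2)∫|u''|² + ρ TP(u)`. -/
def energyE (κ ρ q : ℝ) (u : ℝ → EuclideanSpace ℝ (Fin 3)) : ℝ :=
  κ / 2 * (∫ x in Ioc (0 : ℝ) 1, ‖deriv (deriv u) x‖ ^ 2) + ρ * TPr q u

lemma lintegral_Ioc_comp_const_mul' (F : ℝ → ℝ≥0∞) (hF : Measurable F) {θ : ℝ} (hθ : 0 < θ) :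
    ∫⁻ z in Ioc (-(1/2) : ℝ) (1/2), F (θ * z) =
      ENNReal.ofReal θ⁻¹ * ∫⁻ w in Ioc (-(θ/2)) (θ/2), F w := by
  have h2 : θ / 2 / θ = 1 / 2 := by
    rw [div_div, mul_comm, ← div_div, div_self hθ.ne']
  have h1 : ((θ * ·) ⁻¹' Ioc (-(θ/2)) (θ/2) : Set ℝ) = Ioc (-(1/2)) (1/2) := by
    rw [Set.preimage_const_mul_Ioc₀ _ _ hθ, neg_div, h2]
  have hmapr : ((volume : Measure ℝ).restrict (Ioc (-(1/2):ℝ) (1/2))).map (θ * ·)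
      = ENNReal.ofReal θ⁻¹ • volume.restrict (Ioc (-(θ/2)) (θ/2)) := by
    rw [← h1, ← Measure.restrict_map (measurable_const_mul θ) measurableSet_Ioc,
      Real.map_volume_mul_left hθ.ne', Measure.restrict_smul,
      abs_of_pos (inv_pos.mpr hθ)]
  rw [← lintegral_map hF (measurable_const_mul θ), hmapr, lintegral_smul_measure, smul_eq_mul]

lemma inner_bound' (n : ℕ) (q : ℝ) (hq : 1 ≤ q) (g : ℝ → EuclideanSpace ℝ (Fin n))
    (hmeas : Measurable g) (y θ : ℝ) (hθ : θ ∈ Ioc (0:ℝ) 1) :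
    (∫⁻ z in Ioc (-(1/2) : ℝ) (1/2), ENNReal.ofReal (‖g (y + θ * z) - g y‖ ^ q / |z| ^ q)) ≤
    ∫⁻ z in Ioc (-(1/2) : ℝ) (1/2), ENNReal.ofReal (‖g (y + z) - g y‖ ^ q / |z| ^ q) := by
  obtain ⟨hθ0, hθ1⟩ := hθ
  set F : ℝ → ℝ≥0∞ := fun w => ENNReal.ofReal (‖g (y + w) - g y‖ ^ q / |w| ^ q) with hFdef
  have hF : Measurable F := by
    apply ENNReal.measurable_ofReal.comp
    apply Measurable.div
    · exact ((hmeas.comp (measurable_const.add measurable_id)).sub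
        measurable_const).norm.pow measurable_const
    · exact measurable_id.abs.pow measurable_const
  have hθq : (0:ℝ) < θ ^ q := Real.rpow_pos_of_pos hθ0 q
  have hae : ∀ᵐ z ∂(volume.restrict (Ioc (-(1/2):ℝ) (1/2))),
      ENNReal.ofReal (‖g (y + θ * z) - g y‖ ^ q / |z| ^ q) =
        ENNReal.ofReal (θ ^ q) * F (θ * z) := by
    have h0 : ∀ᵐ z : ℝ ∂(volume.restrict (Ioc (-(1/2):ℝ) (1/2))), z ≠ 0 :=
      ae_restrict_of_ae (by
        rw [ae_iff]
        have : {z : ℝ | ¬ z ≠ 0} = {0} := by ext z; simp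
        rw [this]; exact Real.volume_singleton)
    filter_upwards [h0] with z hz
    have hzq : (0:ℝ) < |z| ^ q := Real.rpow_pos_of_pos (abs_pos.mpr hz) q
    have habs : |θ * z| ^ q = θ ^ q * |z| ^ q := by
      rw [abs_mul, Real.mul_rpow (abs_nonneg _) (abs_nonneg _), abs_of_pos hθ0]
    have key : ‖g (y + θ * z) - g y‖ ^ q / |z| ^ q =
        θ ^ q * (‖g (y + θ * z) - g y‖ ^ q / |θ * z| ^ q) := by
      rw [habs]; field_simp
    rw [key, ENNReal.ofReal_mul hθq.le]
  calc (∫⁻ z in Ioc (-(1/2) : ℝ) (1/2), ENNReal.ofReal (‖g (y + θ * z) - g y‖ ^ q / |z| ^ q))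
      = ∫⁻ z in Ioc (-(1/2) : ℝ) (1/2), ENNReal.ofReal (θ ^ q) * F (θ * z) :=
        lintegral_congr_ae hae
    _ = ENNReal.ofReal (θ ^ q) * ∫⁻ z in Ioc (-(1/2) : ℝ) (1/2), F (θ * z) :=
        lintegral_const_mul' _ _ ENNReal.ofReal_ne_top
    _ = ENNReal.ofReal (θ ^ q) * (ENNReal.ofReal θ⁻¹ * ∫⁻ w in Ioc (-(θ/2)) (θ/2), F w) := by
        rw [lintegral_Ioc_comp_const_mul' F hF hθ0]
    _ ≤ ENNReal.ofReal (θ ^ q) * (ENNReal.ofReal θ⁻¹ * ∫⁻ w in Ioc (-(1/2) : ℝ) (1/2), F w) := by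
        gcongr
    _ = ENNReal.ofReal (θ ^ (q - 1)) * ∫⁻ w in Ioc (-(1/2) : ℝ) (1/2), F w := by
        rw [← mul_assoc, ← ENNReal.ofReal_mul hθq.le]
        congr 2
        rw [← Real.rpow_neg_one θ, ← Real.rpow_add hθ0, ← sub_eq_add_neg]
    _ ≤ 1 * ∫⁻ w in Ioc (-(1/2) : ℝ) (1/2), F w := by
        gcongr
        exact ENNReal.ofReal_le_one.mpr (Real.rpow_le_one hθ0.le hθ1 (by linarith))
    _ = _ := one_mul _

/-- Jensen–Fubini estimate: the θ-averaged difference quotient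
integral is bounded by the Sobolev–Slobodeckii seminorm `[g]_{W^{1-1/q,q}}^q`. -/
theorem averaged_difference_quotient_bound (n : ℕ) (q : ℝ) (hq : 1 ≤ q)
    (g : ℝ → EuclideanSpace ℝ (Fin n)) (hmeas : Measurable g)
    (hper : Function.Periodic g 1) :
    (∫⁻ θ in Ioc (0 : ℝ) 1, ∫⁻ y in Ioc (0 : ℝ) 1, ∫⁻ z in Ioc (-(1/2) : ℝ) (1/2),
        ENNReal.ofReal (‖g (y + θ * z) - g y‖ ^ q / |z| ^ q)) ≤
      ∫⁻ y in Ioc (0 : ℝ) 1, ∫⁻ z in Ioc (-(1/2) : ℝ) (1/2),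
        ENNReal.ofReal (‖g (y + z) - g y‖ ^ q / |z| ^ q) := by

  set RHS := ∫⁻ y in Ioc (0 : ℝ) 1, ∫⁻ z in Ioc (-(1/2) : ℝ) (1/2),
      ENNReal.ofReal (‖g (y + z) - g y‖ ^ q / |z| ^ q) with hRHS
  have key : ∀ θ ∈ Ioc (0:ℝ) 1,
      (∫⁻ y in Ioc (0 : ℝ) 1, ∫⁻ z in Ioc (-(1/2) : ℝ) (1/2),
        ENNReal.ofReal (‖g (y + θ * z) - g y‖ ^ q / |z| ^ q)) ≤ RHS :=
    fun θ hθ => lintegral_mono fun y => inner_bound' n q hq g hmeas y θ hθ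
  calc (∫⁻ θ in Ioc (0 : ℝ) 1, ∫⁻ y in Ioc (0 : ℝ) 1, ∫⁻ z in Ioc (-(1/2) : ℝ) (1/2),
        ENNReal.ofReal (‖g (y + θ * z) - g y‖ ^ q / |z| ^ q))
      ≤ ∫⁻ _ in Ioc (0 : ℝ) 1, RHS :=
        lintegral_mono_ae ((ae_restrict_mem measurableSet_Ioc).mono key)
    _ = RHS := by
        rw [setLIntegral_const, Real.volume_Ioc]
        norm_num
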